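/- Let K > 0 and let η : ℝ → ℝ be twice differentiable on [0, K] with η(K) = 0 and k·η''(k) + 2·η'(k) ≤ 0 for all k ∈ [0, K]. Then (K − k)·k·η'(k) + K·η(k) ≥ 0 for all k ∈ [0, K]. -/

import Mathlib

/-- If the flow-density relation is concave (`k·η''(k) + 2·η'(k) ≤ 0`) on `[0,K]`
and `η(K) = 0`, then `(K − k)·k·η'(k) + K·η(k) ≥ 0` on `[0,K]`. -/
theorem concave_fd_nonneg (K : ℝ) (hK : 0 < K) (η η' η'' : ℝ → ℝ)
    (hd1 : ∀ k ∈ Set.Icc (0 : ℝ) K, HasDerivWithinAt η (η' k) (Set.Icc (0 : ℝ) K) k)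
    (hd2 : ∀ k ∈ Set.Icc (0 : ℝ) K, HasDerivWithinAt η' (η'' k) (Set.Icc (0 : ℝ) K) k)
    (hηK : η K = 0)
    (hconc : ∀ k ∈ Set.Icc (0 : ℝ) K, k * η'' k + 2 * η' k ≤ 0) :
    ∀ k ∈ Set.Icc (0 : ℝ) K, (K - k) * k * η' k + K * η k ≥ 0 := by
  intro k hk
  set φ : ℝ → ℝ := fun x => x * η x with hφ
  set g : ℝ → ℝ := fun x => η x + x * η' x with hg
  -- φ has derivative g within Icc
  have hφd : ∀ x ∈ Set.Icc (0 : ℝ) K,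
      HasDerivWithinAt φ (g x) (Set.Icc (0 : ℝ) K) x := by
    intro x hx
    have := (hasDerivWithinAt_id x (Set.Icc (0:ℝ) K)).mul (hd1 x hx)
    exact this.congr_deriv (by simp [hg])
  -- g has derivative (x η'' x + 2 η' x) within Icc
  have hgd : ∀ x ∈ Set.Icc (0 : ℝ) K,
      HasDerivWithinAt g (x * η'' x + 2 * η' x) (Set.Icc (0 : ℝ) K) x := by
    intro x hx
    have := (hd1 x hx).add ((hasDerivWithinAt_id x (Set.Icc (0:ℝ) K)).mul (hd2 x hx))
    refine this.congr_deriv ?_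
    simp [id]
    ring
  have hcontg : ContinuousOn g (Set.Icc (0:ℝ) K) :=
    fun x hx => (hgd x hx).continuousWithinAt
  have hcontφ : ContinuousOn φ (Set.Icc (0:ℝ) K) :=
    fun x hx => (hφd x hx).continuousWithinAt
  -- interior points: real derivatives
  have hint : interior (Set.Icc (0:ℝ) K) = Set.Ioo 0 K := interior_Icc
  have hgd' : ∀ x ∈ Set.Ioo (0:ℝ) K, HasDerivAt g (x * η'' x + 2 * η' x) x := by
    intro x hx
    have hmem : Set.Icc (0:ℝ) K ∈ nhds x := by
      rw [← hint] at hx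
      exact mem_interior_iff_mem_nhds.mp hx
    exact (hgd x (Set.Ioo_subset_Icc_self hx)).hasDerivAt hmem
  have hφd' : ∀ x ∈ Set.Ioo (0:ℝ) K, HasDerivAt φ (g x) x := by
    intro x hx
    have hmem : Set.Icc (0:ℝ) K ∈ nhds x := by
      rw [← hint] at hx
      exact mem_interior_iff_mem_nhds.mp hx
    exact (hφd x (Set.Ioo_subset_Icc_self hx)).hasDerivAt hmem
  -- g is antitone on Icc
  have hanti : AntitoneOn g (Set.Icc (0:ℝ) K) := by
    apply antitoneOn_of_deriv_nonpos (convex_Icc 0 K) hcontg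
    · intro x hx
      rw [hint] at hx
      exact (hgd' x hx).differentiableAt.differentiableWithinAt
    · intro x hx
      rw [hint] at hx
      rw [(hgd' x hx).deriv]
      have := hconc x (Set.Ioo_subset_Icc_self hx)
      linarith
  rcases eq_or_lt_of_le hk.2 with heq | hlt
  · -- k = K
    rw [heq]
    simp [hηK]
  · -- k < K : mean value theorem on [k, K]
    have hsub : Set.Icc k K ⊆ Set.Icc (0:ℝ) K := Set.Icc_subset_Icc hk.1 le_rfl
    have hsub' : Set.Ioo k K ⊆ Set.Ioo (0:ℝ) K := Set.Ioo_subset_Ioo hk.1 le_rfl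
    obtain ⟨c, hc, hceq⟩ := exists_hasDerivAt_eq_slope φ g hlt
      (hcontφ.mono hsub) (fun x hx => hφd' x (hsub' hx))
    have hgc : g c ≤ g k := hanti hk (hsub (Set.Ioo_subset_Icc_self hc)) (le_of_lt hc.1)
    have hKk : (0:ℝ) < K - k := by linarith
    have : φ K - φ k ≤ g k * (K - k) := by
      rw [hceq] at hgc
      exact (div_le_iff₀ hKk).mp hgc
    have hφK : φ K = 0 := by simp [hφ, hηK]
    have hφk : φ k = k * η k := rfl
    have hgk : g k = η k + k * η' k := rfl
    rw [hφK, hφk] at this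
    rw [hgk] at this
    nlinarith [this]
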